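/- For every integer n ≥ 1, the ratio of the product over j from 0 to n-1 of Γ((n+3+j)/2)·Γ(1/2)/(Γ((4+j)/2)·Γ((1+j)/2)·Γ((2+j)/2)) to the product over j from 0 to n-1 of Γ((n+2+j)/2)·Γ(1/2)/(Γ((1+j)/2)·Γ((1+j)/2)·Γ((4+j)/2)) equals Γ((2n+2)/2)·Γ(1/2)/(Γ((n+2)/2)·Γ((n+1)/2)), and this common value equals 2^n. -/

import Mathlib

open Real Finset

lemma tele_prod (f : ℕ → ℝ) (hf : ∀ j, f j ≠ 0) (n : ℕ) :
    ∏ j ∈ Finset.range n, f (j + 1) / f j = f n / f 0 := by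
  induction n with
  | zero => simp [div_self (hf 0)]
  | succ n ih =>
    rw [Finset.prod_range_succ, ih, div_mul_div_comm, mul_comm (f 0) (f n),
      mul_div_mul_left _ _ (hf n)]

theorem stmt_1 (n : ℕ) (hn : 1 ≤ n) :
    (∏ j ∈ Finset.range n,
        Gamma (((n : ℝ) + 3 + j) / 2) * Gamma (1 / 2) /
          (Gamma ((4 + (j : ℝ)) / 2) * Gamma ((1 + (j : ℝ)) / 2) * Gamma ((2 + (j : ℝ)) / 2))) /
      (∏ j ∈ Finset.range n,
        Gamma (((n : ℝ) + 2 + j) / 2) * Gamma (1 / 2) /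
          (Gamma ((1 + (j : ℝ)) / 2) * Gamma ((1 + (j : ℝ)) / 2) * Gamma ((4 + (j : ℝ)) / 2))) =
      Gamma ((2 * (n : ℝ) + 2) / 2) * Gamma (1 / 2) /
        (Gamma (((n : ℝ) + 2) / 2) * Gamma (((n : ℝ) + 1) / 2)) ∧
    Gamma ((2 * (n : ℝ) + 2) / 2) * Gamma (1 / 2) /
        (Gamma (((n : ℝ) + 2) / 2) * Gamma (((n : ℝ) + 1) / 2)) = 2 ^ n := by
  have hpos : ∀ x : ℝ, 0 < x → Gamma x ≠ 0 := fun x hx => (Real.Gamma_pos_of_pos hx).ne'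
  -- Second part first
  have h2 : Gamma ((2 * (n : ℝ) + 2) / 2) * Gamma (1 / 2) /
      (Gamma (((n : ℝ) + 2) / 2) * Gamma (((n : ℝ) + 1) / 2)) = 2 ^ n := by
    have hdup := Real.Gamma_mul_Gamma_add_half (((n : ℝ) + 1) / 2)
    rw [show ((n : ℝ) + 1) / 2 + 1 / 2 = ((n : ℝ) + 2) / 2 by ring,
      show 2 * (((n : ℝ) + 1) / 2) = (n : ℝ) + 1 by ring] at hdup
    rw [show (1 : ℝ) - ((n : ℝ) + 1) = -(n : ℝ) by ring] at hdup
    rw [show (2 * (n : ℝ) + 2) / 2 = (n : ℝ) + 1 by ring, Real.Gamma_one_half_eq,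
      mul_comm (Gamma (((n : ℝ) + 2) / 2)), hdup, Real.rpow_neg (by norm_num),
      Real.rpow_natCast]
    have hΓ : Gamma ((n : ℝ) + 1) ≠ 0 := hpos _ (by positivity)
    have hπ : √π ≠ 0 := by positivity
    have h2n : (2 : ℝ) ^ n ≠ 0 := by positivity
    field_simp
  refine ⟨?_, h2⟩
  rw [← Finset.prod_div_distrib]
  have hstep : ∀ j ∈ Finset.range n,
      Gamma (((n : ℝ) + 3 + j) / 2) * Gamma (1 / 2) /
          (Gamma ((4 + (j : ℝ)) / 2) * Gamma ((1 + (j : ℝ)) / 2) * Gamma ((2 + (j : ℝ)) / 2)) /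
        (Gamma (((n : ℝ) + 2 + j) / 2) * Gamma (1 / 2) /
          (Gamma ((1 + (j : ℝ)) / 2) * Gamma ((1 + (j : ℝ)) / 2) * Gamma ((4 + (j : ℝ)) / 2))) =
      (Gamma (((n : ℝ) + 2 + (j + 1 : ℕ)) / 2) / Gamma (((n : ℝ) + 2 + j) / 2)) *
        (Gamma ((1 + (j : ℝ)) / 2) / Gamma ((1 + ((j + 1 : ℕ) : ℝ)) / 2)) := by
    intro j _
    have e1 : ((n : ℝ) + 2 + ((j + 1 : ℕ) : ℝ)) / 2 = ((n : ℝ) + 3 + j) / 2 := by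
      push_cast; ring
    have e2 : (1 + ((j + 1 : ℕ) : ℝ)) / 2 = (2 + (j : ℝ)) / 2 := by push_cast; ring
    rw [e1, e2]
    have h1 := hpos (((n : ℝ) + 3 + j) / 2) (by positivity)
    have h3 := hpos (((n : ℝ) + 2 + j) / 2) (by positivity)
    have h4 := hpos ((4 + (j : ℝ)) / 2) (by positivity)
    have h5 := hpos ((1 + (j : ℝ)) / 2) (by positivity)
    have h6 := hpos ((2 + (j : ℝ)) / 2) (by positivity)
    have h7 := hpos ((1 : ℝ) / 2) (by norm_num)
    field_simp
  rw [Finset.prod_congr rfl hstep, Finset.prod_mul_distrib]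
  have t1 := tele_prod (fun j => Gamma (((n : ℝ) + 2 + j) / 2))
    (fun j => hpos _ (by positivity)) n
  have t2 := tele_prod (fun j => (Gamma ((1 + (j : ℝ)) / 2))⁻¹)
    (fun j => by
      have := hpos ((1 + (j : ℝ)) / 2) (by positivity)
      simpa using this) n
  have e3 : ∀ j : ℕ, Gamma ((1 + (j : ℝ)) / 2) / Gamma ((1 + ((j + 1 : ℕ) : ℝ)) / 2) =
      (Gamma ((1 + ((j + 1 : ℕ) : ℝ)) / 2))⁻¹ / (Gamma ((1 + (j : ℝ)) / 2))⁻¹ := by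
    intro j
    have ha := hpos ((1 + (j : ℝ)) / 2) (by positivity)
    have hb := hpos ((1 + ((j + 1 : ℕ) : ℝ)) / 2) (by positivity)
    field_simp
  rw [Finset.prod_congr rfl (fun j _ => e3 j), t1, t2]
  have e4 : ((n : ℝ) + 2 + (0 : ℕ)) / 2 = ((n : ℝ) + 2) / 2 := by norm_num
  have e5 : ((n : ℝ) + 2 + (n : ℕ)) / 2 = (2 * (n : ℝ) + 2) / 2 := by push_cast; ring
  have e6 : (1 + ((0 : ℕ) : ℝ)) / 2 = (1 : ℝ) / 2 := by norm_num
  have e7 : (1 + ((n : ℕ) : ℝ)) / 2 = ((n : ℝ) + 1) / 2 := by push_cast; ring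
  rw [e4, e5, e6, e7]
  have ha := hpos (((n : ℝ) + 2) / 2) (by positivity)
  have hb := hpos (((n : ℝ) + 1) / 2) (by positivity)
  have hc := hpos ((1 : ℝ) / 2) (by norm_num)
  have hd := hpos ((2 * (n : ℝ) + 2) / 2) (by positivity)
  field_simp
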